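/- Let W be a Weyl group, β a cominuscule simple root, and w ∈ W Grassmannian at β. Then for any positive root α with ℓ(w s_α) = ℓ(w) + 1 and the coefficient n_{αβ} of β in α nonzero, it holds that n_{αβ} = 1 and w s_α is again Grassmannian at β. -/

import Mathlib

/-- Monk–Chevalley lemma in the cominuscule case.  Let `β = b i₀` be a
cominuscule simple root (every positive root is crystallographic, with
`β`-coefficient at most `1`), and let `w` be Grassmannian at `β` (its only
possible descent is `β`).  If `α` is a positive root with
`ℓ(w s_α) = ℓ(w) + 1` (lengths measured by inversion sets
`I(u) = {γ ∈ Pos : u γ ∈ -Pos}`, `s_α` the reflection in `α`) and the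
coefficient `n_{αβ}` of `β` in `α` is nonzero, then `n_{αβ} = 1` and `w s_α`
is again Grassmannian at `β`. -/
theorem stmt18 {V ι : Type*} [AddCommGroup V] [Module ℝ V] [Fintype ι]
    (b : Module.Basis ι ℝ V) (Pos : Set V) (hfin : Pos.Finite)
    (hΔ : ∀ i, b i ∈ Pos)
    (hdisj : ∀ α ∈ Pos, -α ∉ Pos)
    (i₀ : ι)
    (hcom : ∀ α ∈ Pos, b.repr α i₀ ≤ 1)
    (hint : ∀ α ∈ Pos, ∀ i, ∃ m : ℕ, b.repr α i = m)
    (w : V ≃ₗ[ℝ] V) (hw : ∀ α ∈ Pos, w α ∈ Pos ∨ -(w α) ∈ Pos)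
    (hGrass : ∀ i, i ≠ i₀ → -(w (b i)) ∉ Pos)
    (α : V) (hα : α ∈ Pos)
    (sα : V ≃ₗ[ℝ] V)
    (hsα : ∃ f : V →ₗ[ℝ] ℝ, f α = 2 ∧ ∀ v, sα v = v - f v • α)
    (hsroot : ∀ γ ∈ Pos, sα γ ∈ Pos ∨ -(sα γ) ∈ Pos)
    (hlen : ({γ | γ ∈ Pos ∧ -((w * sα) γ) ∈ Pos}).ncard
        = ({γ | γ ∈ Pos ∧ -(w γ) ∈ Pos}).ncard + 1)
    (hnz : b.repr α i₀ ≠ 0) :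
    b.repr α i₀ = 1 ∧ ∀ i, i ≠ i₀ → -((w * sα) (b i)) ∉ Pos := by
  classical
  obtain ⟨f, hfα, hsv⟩ := hsα
  have hmul : ∀ v : V, (w * sα) v = w (sα v) := fun v => rfl
  -- 0 is not a positive root
  have h0 : (0 : V) ∉ Pos := by
    intro h
    exact hdisj 0 h (by simpa using h)
  -- positive roots have nonnegative coordinates
  have hnn : ∀ γ ∈ Pos, ∀ i, 0 ≤ b.repr γ i := by
    intro γ hγ i
    obtain ⟨m, hm⟩ := hint γ hγ i
    rw [hm]
    exact_mod_cast m.cast_nonneg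
  -- the β-coefficient of α is 1
  have hcα : b.repr α i₀ = 1 := by
    obtain ⟨m, hm⟩ := hint α hα i₀
    have h1 : (m : ℝ) ≤ 1 := hm ▸ hcom α hα
    have h2 : (m : ℝ) ≠ 0 := hm ▸ hnz
    have hm1 : m ≤ 1 := by exact_mod_cast h1
    have hm0 : m ≠ 0 := by exact_mod_cast h2
    have : m = 1 := by omega
    rw [hm, this, Nat.cast_one]
  -- key positivity lemma: a sum of three nonnegative-coordinate vectors
  -- (with one of them in Pos) cannot vanish
  have aux2 : ∀ u v x : V, u ∈ Pos → v ∈ Pos → x ∈ Pos → ∀ t : ℝ, 0 ≤ t →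
      u + v + t • x = 0 → False := by
    intro u v x hu hv hx t ht heq
    have hu0 : u = 0 := by
      have hco : ∀ i, b.repr u i = 0 := by
        intro i
        have h1 := hnn u hu i
        have h2 := hnn v hv i
        have h3 := hnn x hx i
        have h4 : b.repr u i + b.repr v i + t * b.repr x i = 0 := by
          have := congrArg (fun z => b.repr z i) heq
          simpa [map_add, map_smul] using this
        nlinarith
      have : b.repr u = 0 := Finsupp.ext hco
      exact (LinearEquiv.map_eq_zero_iff b.repr).mp (by simpa using this)
    exact h0 (hu0 ▸ hu)
  -- sα is an involution
  have hinv : ∀ v, sα (sα v) = v := by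
    intro v
    rw [hsv (sα v), hsv v, map_sub, map_smul, hfα, smul_eq_mul]
    module
  -- coefficient of sα v at i₀
  have hcs : ∀ v, b.repr (sα v) i₀ = b.repr v i₀ - f v := by
    intro v
    rw [hsv]
    simp [map_sub, map_smul, hcα]
  -- nonnegativity of f γ for γ in Pos with -(sα γ) ∈ Pos
  have hfnn : ∀ γ ∈ Pos, -(sα γ) ∈ Pos → 0 ≤ f γ := by
    intro γ hγ hτ
    have h1 := hnn γ hγ i₀
    have h2 := hnn _ hτ i₀
    have h3 : b.repr (-(sα γ)) i₀ = f γ - b.repr γ i₀ := by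
      rw [map_neg, Finsupp.neg_apply, hcs]; ring
    rw [h3] at h2
    linarith
  have hAfin : ({γ | γ ∈ Pos ∧ -(w γ) ∈ Pos}).Finite :=
    hfin.subset fun γ hγ => hγ.1
  have hBfin : ({γ | γ ∈ Pos ∧ -((w * sα) γ) ∈ Pos}).Finite :=
    hfin.subset fun γ hγ => hγ.1
  -- Claim: w α ∈ Pos
  have hwα : w α ∈ Pos := by
    rcases hw α hα with h | h
    · exact h
    exfalso
    by_cases K : ∃ γ, γ ∈ Pos ∧ -(sα γ) ∈ Pos ∧ w γ ∈ Pos ∧ w (-(sα γ)) ∈ Pos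
    · obtain ⟨γ, hγ, hτ, hwγ, hwτ⟩ := K
      have hf := hfnn γ hγ hτ
      have heq : w γ + w (-(sα γ)) + f γ • (-(w α)) = 0 := by
        have e0 : γ + -(sα γ) - f γ • α = 0 := by rw [hsv]; module
        have e1 : w γ + w (-(sα γ)) + f γ • (-(w α))
            = w (γ + -(sα γ) - f γ • α) := by
          rw [map_sub, map_add, map_smul]; module
        rw [e1, e0, map_zero]
      exact aux2 _ _ _ hwγ hwτ h (f γ) hf heq
    · -- build an injection I(wsα) ↪ I(w)
      have hle : ({γ | γ ∈ Pos ∧ -((w * sα) γ) ∈ Pos}).ncard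
          ≤ ({γ | γ ∈ Pos ∧ -(w γ) ∈ Pos}).ncard := by
        refine Set.ncard_le_ncard_of_injOn
          (fun γ => if sα γ ∈ Pos then sα γ else γ) ?_ ?_ hAfin
        · intro γ hγB
          obtain ⟨hγ, hwsγ⟩ := hγB
          rw [hmul] at hwsγ
          by_cases hs : sα γ ∈ Pos
          · simp only [if_pos hs]
            exact ⟨hs, hwsγ⟩
          · simp only [if_neg hs]
            have hτ : -(sα γ) ∈ Pos := (hsroot γ hγ).resolve_left hs
            refine ⟨hγ, ?_⟩
            by_contra hnA
            have hwγ : w γ ∈ Pos := (hw γ hγ).resolve_right hnA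
            have hwτ : w (-(sα γ)) ∈ Pos := by
              rw [map_neg]; exact hwsγ
            exact K ⟨γ, hγ, hτ, hwγ, hwτ⟩
        · intro γ₁ h₁ γ₂ h₂ hφ
          by_cases hs1 : sα γ₁ ∈ Pos <;> by_cases hs2 : sα γ₂ ∈ Pos
          · simp only [if_pos hs1, if_pos hs2] at hφ
            exact sα.injective hφ
          · simp only [if_pos hs1, if_neg hs2] at hφ
            exact absurd (show sα γ₂ ∈ Pos by rw [← hφ, hinv]; exact h₁.1) hs2
          · simp only [if_neg hs1, if_pos hs2] at hφ
            exact absurd (show sα γ₁ ∈ Pos by rw [hφ, hinv]; exact h₂.1) hs1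
          · simp only [if_neg hs1, if_neg hs2] at hφ
            exact hφ
      omega
  refine ⟨hcα, ?_⟩
  intro i hi H
  have hwbi : w (b i) ∈ Pos := (hw (b i) (hΔ i)).resolve_right (hGrass i hi)
  have hcbi : b.repr (b i) i₀ = 0 := by
    rw [b.repr_self]
    exact Finsupp.single_eq_of_ne' hi
  rw [hmul] at H
  by_cases hs : sα (b i) ∈ Pos
  · -- Case: sα (b i) is positive; direct positivity contradiction
    have hf : f (b i) ≤ 0 := by
      have h2 := hnn _ hs i₀
      rw [hcs, hcbi] at h2
      linarith
    have heq : w (b i) + -(w (sα (b i))) + (-(f (b i))) • w α = 0 := by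
      have e0 : b i - sα (b i) - f (b i) • α = 0 := by rw [hsv]; module
      have e1 : w (b i) + -(w (sα (b i))) + (-(f (b i))) • w α
          = w (b i - sα (b i) - f (b i) • α) := by
        rw [map_sub, map_sub, map_smul]; module
      rw [e1, e0, map_zero]
    exact aux2 _ _ _ hwbi H hwα (-(f (b i))) (by linarith) heq
  · -- Case: -(sα (b i)) is positive
    have hε : -(sα (b i)) ∈ Pos := (hsroot (b i) (hΔ i)).resolve_left hs
    set ε := -(sα (b i)) with hεdef
    have hsε : sα ε = -(b i) := by rw [hεdef, map_neg, hinv]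
    have hwε : w ε ∈ Pos := by rw [hεdef, map_neg]; exact H
    by_cases K : ∃ γ, γ ∈ Pos ∧ -(sα γ) ∈ Pos ∧ -(w γ) ∈ Pos ∧ -(w (-(sα γ))) ∈ Pos
    · obtain ⟨γ, hγ, hτ, hA1, hA2⟩ := K
      have hf := hfnn γ hγ hτ
      have heq : -(w γ) + -(w (-(sα γ))) + f γ • w α = 0 := by
        have e0 : f γ • α - γ - -(sα γ) = 0 := by rw [hsv]; module
        have e1 : -(w γ) + -(w (-(sα γ))) + f γ • w α
            = w (f γ • α - γ - -(sα γ)) := by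
          rw [map_sub, map_sub, map_smul]; module
        rw [e1, e0, map_zero]
      exact aux2 _ _ _ hA1 hA2 hwα (f γ) hf heq
    · -- injection from I(w) into I(wsα) \ {b i, ε, α} : contradiction with hlen
      -- distinctness of the three elements
      have hbiα : b i ≠ α := by
        intro h
        rw [h, hcα] at hcbi
        norm_num at hcbi
      have hbiε : b i ≠ ε := by
        intro h
        have hf0 : f (b i) = 0 := by
          have := congrArg (fun z => b.repr z i₀) h
          simp only [hεdef, map_neg, Finsupp.neg_apply, hcs, hcbi] at this
          linarith
        have : ε = -(b i) := by rw [hεdef, hsv, hf0]; module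
        rw [this] at hε
        exact hdisj (b i) (hΔ i) hε
      have hεα : ε ≠ α := by
        intro h
        have h2 : sα ε = sα α := by rw [h]
        rw [hsε, hsv α, hfα] at h2
        have : b i = α := by
          have : -(b i) = α - (2:ℝ) • α := h2
          have e : α - (2:ℝ) • α = -α := by module
          rw [e] at this
          exact neg_injective this
        exact hbiα this
      -- the three elements lie in I(wsα)
      have hbiB : b i ∈ {γ | γ ∈ Pos ∧ -((w * sα) γ) ∈ Pos} := by
        refine ⟨hΔ i, ?_⟩
        rw [hmul]
        exact H
      have hεB : ε ∈ {γ | γ ∈ Pos ∧ -((w * sα) γ) ∈ Pos} := by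
        refine ⟨hε, ?_⟩
        rw [hmul, hsε, map_neg, neg_neg]
        exact hwbi
      have hαB : α ∈ {γ | γ ∈ Pos ∧ -((w * sα) γ) ∈ Pos} := by
        refine ⟨hα, ?_⟩
        rw [hmul]
        have hsαα : sα α = -α := by rw [hsv, hfα]; module
        rw [hsαα, map_neg, neg_neg]
        exact hwα
      set S : Set V := {b i, ε, α} with hSdef
      have hSB : S ⊆ {γ | γ ∈ Pos ∧ -((w * sα) γ) ∈ Pos} := by
        intro x hx
        rcases hx with h | h | h
        · exact h ▸ hbiB
        · exact h ▸ hεB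
        · exact h ▸ hαB
      have hScard : S.ncard = 3 := by
        rw [hSdef, Set.ncard_insert_of_notMem (by simp [hbiε, hbiα]) (Set.toFinite _),
          Set.ncard_pair hεα]
      -- the injection
      have hle : ({γ | γ ∈ Pos ∧ -(w γ) ∈ Pos}).ncard
          ≤ (({γ | γ ∈ Pos ∧ -((w * sα) γ) ∈ Pos}) \ S).ncard := by
        refine Set.ncard_le_ncard_of_injOn
          (fun γ => if sα γ ∈ Pos then sα γ else γ) ?_ ?_ (hBfin.diff (t := S))
        · intro γ hγA
          obtain ⟨hγ, hwγ⟩ := hγA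
          by_cases hsg : sα γ ∈ Pos
          · simp only [if_pos hsg]
            constructor
            · refine ⟨hsg, ?_⟩
              rw [hmul, hinv]
              exact hwγ
            · -- sα γ ∉ S
              rw [hSdef]
              intro hmem
              rcases hmem with h | h | h
              · -- sα γ = b i ⇒ γ = sα (b i) = -ε ∈ Pos, contradiction
                have : γ = -ε := by
                  rw [hεdef, neg_neg, ← h, hinv]
                rw [this] at hγ
                exact hdisj ε hε hγ
              · -- sα γ = ε ⇒ γ = sα ε = -(b i) ∈ Pos, contradiction
                have : γ = -(b i) := by rw [← hsε, ← h, hinv]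
                rw [this] at hγ
                exact hdisj (b i) (hΔ i) hγ
              · -- sα γ = α ⇒ γ = sα α = -α ∈ Pos, contradiction
                have hsαα : sα α = -α := by rw [hsv, hfα]; module
                have : γ = -α := by rw [← hsαα, ← h, hinv]
                rw [this] at hγ
                exact hdisj α hα hγ
          · simp only [if_neg hsg]
            have hτ : -(sα γ) ∈ Pos := (hsroot γ hγ).resolve_left hsg
            constructor
            · refine ⟨hγ, ?_⟩
              rw [hmul]
              by_contra hnB
              have hwτ' : -(w (-(sα γ))) ∈ Pos := by
                rcases hw _ hτ with hgood | hbad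
                · rw [map_neg] at hgood
                  exact absurd hgood hnB
                · exact hbad
              exact K ⟨γ, hγ, hτ, hwγ, hwτ'⟩
            · -- γ ∉ S
              rw [hSdef]
              intro hmem
              rcases hmem with h | h | h
              · rw [h] at hwγ
                exact hGrass i hi hwγ
              · rw [h] at hwγ
                exact hdisj (w ε) hwε hwγ
              · rw [h] at hwγ
                exact hdisj (w α) hwα hwγ
        · intro γ₁ h₁ γ₂ h₂ hφ
          by_cases hs1 : sα γ₁ ∈ Pos <;> by_cases hs2 : sα γ₂ ∈ Pos
          · simp only [if_pos hs1, if_pos hs2] at hφ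
            exact sα.injective hφ
          · simp only [if_pos hs1, if_neg hs2] at hφ
            exact absurd (show sα γ₂ ∈ Pos by rw [← hφ, hinv]; exact h₁.1) hs2
          · simp only [if_neg hs1, if_pos hs2] at hφ
            exact absurd (show sα γ₁ ∈ Pos by rw [hφ, hinv]; exact h₂.1) hs1
          · simp only [if_neg hs1, if_neg hs2] at hφ
            exact hφ
      have hdiff : (({γ | γ ∈ Pos ∧ -((w * sα) γ) ∈ Pos}) \ S).ncard + S.ncard
          = ({γ | γ ∈ Pos ∧ -((w * sα) γ) ∈ Pos}).ncard :=
        Set.ncard_diff_add_ncard_of_subset hSB hBfin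
      omega
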